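/- If φ: G → B is a fibration of directed multigraphs and φ(x) = φ(y), then the universal total graphs (views) of G at x and at y are isomorphic as rooted in-trees: view_G(x) ≅ view_G(y). -/

import Mathlib

/-- A directed multigraph: node set `N`, arc set `A`, source and target maps. -/
structure Multigraph (N A : Type) where
  s : A → N
  t : A → N

/-- A homomorphism of directed multigraphs: maps on nodes and arcs commuting
with source and target. -/
structure GraphHom {N A N' A' : Type} (G : Multigraph N A) (B : Multigraph N' A') where
  nodeMap : N → N'
  arcMap : A → A'
  map_s : ∀ a, B.s (arcMap a) = nodeMap (G.s a)
  map_t : ∀ a, B.t (arcMap a) = nodeMap (G.t a)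

/-- A fibration: every arc of the base lifts uniquely at every node in the
fibre of its target. -/
def IsFibration {N A N' A' : Type} {G : Multigraph N A} {B : Multigraph N' A'}
    (φ : GraphHom G B) : Prop :=
  ∀ (a : A') (x : N), φ.nodeMap x = B.t a →
    ∃! a' : A, φ.arcMap a' = a ∧ G.t a' = x

/-- `IsPathTo G l x` : `l` is (the reversed arc list of) a path ending at `x`;
the head of `l` is the arc closest to `x`. The empty list is the empty path at `x`. -/
def IsPathTo {N A : Type} (G : Multigraph N A) : List A → N → Prop
  | [], _ => True
  | a :: l, x => G.t a = x ∧ IsPathTo G l (G.s a)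

/-- Nodes of the view (universal total graph) of `G` at `x`: finite paths ending at `x`. -/
abbrev View {N A : Type} (G : Multigraph N A) (x : N) := {l : List A // IsPathTo G l x}

/-- Isomorphism of views as rooted in-trees: a bijection of paths preserving the
root (the empty path) and the tree arc relation (`p` is obtained from `q` by
prepending one arc at the far end). -/
def ViewIso {N A : Type} (G : Multigraph N A) (x y : N) : Prop :=
  ∃ e : View G x ≃ View G y,
    ((e ⟨[], by simp [IsPathTo]⟩ : View G y) : List A) = [] ∧
    ∀ p q : View G x,
      (∃ a, (p : List A) = (q : List A) ++ [a]) ↔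
      (∃ a, ((e p : View G y) : List A) = ((e q : View G y) : List A) ++ [a])

section Aux

variable {N A N' A' : Type} {G : Multigraph N A} {B : Multigraph N' A'}

/-- unique lift of the projection of `a` at `y`. -/
noncomputable def liftArc (φ : GraphHom G B) (hφ : IsFibration φ) (a : A) (y : N)
    (h : φ.nodeMap y = B.t (φ.arcMap a)) : A :=
  (hφ (φ.arcMap a) y h).choose

theorem liftArc_spec (φ : GraphHom G B) (hφ : IsFibration φ) (a : A) (y : N)
    (h : φ.nodeMap y = B.t (φ.arcMap a)) :
    φ.arcMap (liftArc φ hφ a y h) = φ.arcMap a ∧ G.t (liftArc φ hφ a y h) = y :=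
  (hφ (φ.arcMap a) y h).choose_spec.1

theorem liftArc_unique (φ : GraphHom G B) (hφ : IsFibration φ) (a : A) (y : N)
    (h : φ.nodeMap y = B.t (φ.arcMap a)) (a' : A)
    (h1 : φ.arcMap a' = φ.arcMap a) (h2 : G.t a' = y) :
    a' = liftArc φ hφ a y h :=
  (hφ (φ.arcMap a) y h).choose_spec.2 a' ⟨h1, h2⟩

theorem liftArc_head_eq (φ : GraphHom G B) (a : A) (x y : N)
    (hp : G.t a = x) (hxy : φ.nodeMap x = φ.nodeMap y) :
    φ.nodeMap y = B.t (φ.arcMap a) := by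
  rw [φ.map_t, hp, ← hxy]

theorem liftArc_src_eq (φ : GraphHom G B) (hφ : IsFibration φ) (a : A) (y : N)
    (h : φ.nodeMap y = B.t (φ.arcMap a)) :
    φ.nodeMap (G.s a) = φ.nodeMap (G.s (liftArc φ hφ a y h)) := by
  rw [← φ.map_s, ← φ.map_s, (liftArc_spec φ hφ a y h).1]

/-- lift of a whole path at `y`. -/
noncomputable def liftPath (φ : GraphHom G B) (hφ : IsFibration φ) :
    (l : List A) → (x y : N) → IsPathTo G l x → φ.nodeMap x = φ.nodeMap y → List A
  | [], _, _, _, _ => []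
  | a :: l, x, y, h, hxy =>
    let a' := liftArc φ hφ a y (liftArc_head_eq φ a x y h.1 hxy)
    a' :: liftPath φ hφ l (G.s a) (G.s a') h.2
      (liftArc_src_eq φ hφ a y (liftArc_head_eq φ a x y h.1 hxy))

theorem liftPath_isPathTo (φ : GraphHom G B) (hφ : IsFibration φ) :
    ∀ (l : List A) (x y : N) (h : IsPathTo G l x) (hxy : φ.nodeMap x = φ.nodeMap y),
      IsPathTo G (liftPath φ hφ l x y h hxy) y
  | [], _, _, _, _ => trivial
  | a :: l, x, y, h, hxy => by
    refine ⟨(liftArc_spec φ hφ a y _).2, ?_⟩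
    exact liftPath_isPathTo φ hφ l _ _ h.2 _

theorem liftPath_liftPath (φ : GraphHom G B) (hφ : IsFibration φ) :
    ∀ (l : List A) (x y : N) (h : IsPathTo G l x) (hxy : φ.nodeMap x = φ.nodeMap y)
      (h' : IsPathTo G (liftPath φ hφ l x y h hxy) y)
      (hyx : φ.nodeMap y = φ.nodeMap x),
      liftPath φ hφ (liftPath φ hφ l x y h hxy) y x h' hyx = l
  | [], _, _, _, _, _, _ => rfl
  | a :: l, x, y, h, hxy, h', hyx => by
    simp only [liftPath]
    set a' := liftArc φ hφ a y (liftArc_head_eq φ a x y h.1 hxy) with ha'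
    have hback : liftArc φ hφ a' x (liftArc_head_eq φ a' y x h'.1 hyx) = a := by
      symm
      apply liftArc_unique
      · exact (liftArc_spec φ hφ a y _).1.symm
      · exact h.1
    have htail := liftPath_liftPath φ hφ l (G.s a) (G.s a') h.2
      (liftArc_src_eq φ hφ a y (liftArc_head_eq φ a x y h.1 hxy)) h'.2
      ((liftArc_src_eq φ hφ a' x (liftArc_head_eq φ a' y x h'.1 hyx)).trans
        (by rw [hback]))
    simp only [hback, ha'.symm]
    exact congrArg (a :: ·) htail

theorem liftPath_append (φ : GraphHom G B) (hφ : IsFibration φ) :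
    ∀ (l : List A) (a : A) (x y : N) (h : IsPathTo G (l ++ [a]) x)
      (h0 : IsPathTo G l x) (hxy : φ.nodeMap x = φ.nodeMap y),
      ∃ b, liftPath φ hφ (l ++ [a]) x y h hxy = liftPath φ hφ l x y h0 hxy ++ [b]
  | [], a, x, y, h, h0, hxy => ⟨_, rfl⟩
  | c :: l, a, x, y, h, h0, hxy => by
    simp only [List.cons_append, liftPath]
    have hh : liftArc_head_eq φ c x y h.1 hxy = liftArc_head_eq φ c x y h0.1 hxy := rfl
    obtain ⟨b, hb⟩ := liftPath_append φ hφ l a (G.s c)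
      (G.s (liftArc φ hφ c y (liftArc_head_eq φ c x y h.1 hxy))) h.2 h0.2
      (liftArc_src_eq φ hφ c y (liftArc_head_eq φ c x y h.1 hxy))
    exact ⟨b, congrArg (liftArc φ hφ c y (liftArc_head_eq φ c x y h.1 hxy) :: ·) hb⟩

theorem isPathTo_of_append (G : Multigraph N A) :
    ∀ (l : List A) (a : A) (x : N), IsPathTo G (l ++ [a]) x → IsPathTo G l x
  | [], _, _, _ => trivial
  | c :: l, a, x, h => ⟨h.1, isPathTo_of_append G l a (G.s c) h.2⟩

end Aux

/-- Nodes in the same fibre of a fibration have isomorphic views. -/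
theorem fibration_view_iso {N A N' A' : Type}
    {G : Multigraph N A} {B : Multigraph N' A'} (φ : GraphHom G B)
    (hφ : IsFibration φ) (x y : N) (hxy : φ.nodeMap x = φ.nodeMap y) :
    ViewIso G x y := by
  refine ⟨{
    toFun := fun p => ⟨liftPath φ hφ p.1 x y p.2 hxy,
      liftPath_isPathTo φ hφ p.1 x y p.2 hxy⟩
    invFun := fun q => ⟨liftPath φ hφ q.1 y x q.2 hxy.symm,
      liftPath_isPathTo φ hφ q.1 y x q.2 hxy.symm⟩
    left_inv := fun p => Subtype.ext (liftPath_liftPath φ hφ p.1 x y p.2 hxy _ hxy.symm)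
    right_inv := fun q => Subtype.ext (liftPath_liftPath φ hφ q.1 y x q.2 hxy.symm _ hxy)
  }, rfl, ?_⟩
  intro p q
  constructor
  · rintro ⟨a, ha⟩
    obtain ⟨l, hl⟩ := p
    cases ha
    obtain ⟨b, hb⟩ := liftPath_append φ hφ q.1 a x y hl q.2 hxy
    exact ⟨b, hb⟩
  · rintro ⟨a, ha⟩
    simp only [Equiv.coe_fn_mk] at ha
    obtain ⟨b, hb⟩ := liftPath_append φ hφ (liftPath φ hφ q.1 x y q.2 hxy) a y x
      (ha ▸ liftPath_isPathTo φ hφ p.1 x y p.2 hxy)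
      (liftPath_isPathTo φ hφ q.1 x y q.2 hxy) hxy.symm
    refine ⟨b, ?_⟩
    have hp : p.1 = liftPath φ hφ (liftPath φ hφ p.1 x y p.2 hxy) y x
        (liftPath_isPathTo φ hφ p.1 x y p.2 hxy) hxy.symm :=
      (liftPath_liftPath φ hφ p.1 x y p.2 hxy _ hxy.symm).symm
    have hq : q.1 = liftPath φ hφ (liftPath φ hφ q.1 x y q.2 hxy) y x
        (liftPath_isPathTo φ hφ q.1 x y q.2 hxy) hxy.symm :=
      (liftPath_liftPath φ hφ q.1 x y q.2 hxy _ hxy.symm).symm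
    rw [hp, hq, ← hb]
    congr 1
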